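/- arXiv:1003.3029 — 3 statements merged into one kernel-verified Lean document; each statement's English description precedes it below -/
import Mathlib

section
/- Let p be a prime and g a positive integer. The reduction-mod-p homomorphism from Sp(2g, ℤ) to Sp(2g, ℤ/pℤ) (applying reduction mod p to each matrix entry) is surjective. -/
set_option linter.unusedSectionVars false
open Matrix

section RingLemmas
variable {n R : Type*} [DecidableEq n] [Fintype n] [CommRing R]

lemma E_mem (S : Matrix n n R) (hS : Sᵀ = S) :
    fromBlocks 1 S 0 1 ∈ Matrix.symplecticGroup n R := by
  rw [SymplecticGroup.mem_iff, Matrix.J]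
  simp [fromBlocks_transpose, fromBlocks_multiply, hS]

lemma F_mem (S : Matrix n n R) (hS : Sᵀ = S) :
    fromBlocks 1 0 S 1 ∈ Matrix.symplecticGroup n R := by
  rw [SymplecticGroup.mem_iff, Matrix.J]
  simp [fromBlocks_transpose, fromBlocks_multiply, hS]

lemma chi_mem (a b c d : n → R) (h : ∀ i, a i * d i - b i * c i = 1) :
    fromBlocks (diagonal a) (diagonal b) (diagonal c) (diagonal d)
      ∈ Matrix.symplecticGroup n R := by
  rw [SymplecticGroup.mem_iff, Matrix.J]
  simp only [fromBlocks_transpose, fromBlocks_multiply, diagonal_transpose,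
    Matrix.mul_zero, Matrix.zero_mul, Matrix.mul_one, Matrix.one_mul, Matrix.mul_neg,
    Matrix.neg_mul, diagonal_mul_diagonal, add_zero, zero_add]
  ext (i | i) (j | j) <;> rcases eq_or_ne i j with rfl | hij <;>
    simp [diagonal_apply, Matrix.one_apply, *] <;>
    (first
      | (linear_combination h i)
      | (linear_combination (-1 : R) * h i)
      | linear_combination)

omit [Fintype n] in
lemma J_map {S : Type*} [CommRing S] (f : R →+* S) :
    (Matrix.J n R).map f = Matrix.J n S := by
  ext (i | i) (j | j) <;>
    simp [Matrix.J, Matrix.map_apply, fromBlocks, Matrix.one_apply, apply_ite f]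

lemma map_sp_mem {S : Type*} [CommRing S] (f : R →+* S) {M : Matrix (n ⊕ n) (n ⊕ n) R}
    (h : M ∈ Matrix.symplecticGroup n R) : M.map f ∈ Matrix.symplecticGroup n S := by
  rw [SymplecticGroup.mem_iff] at h ⊢
  rw [← J_map f, ← Matrix.map_mul, ← transpose_map, ← Matrix.map_mul, h]

end RingLemmas

section RingLemmas2
variable {n R : Type*} [DecidableEq n] [Fintype n] [CommRing R]

omit [Fintype n] in
lemma stdBasis_transpose (i j : n) (c : R) :
    (Matrix.single i j c)ᵀ = Matrix.single j i c := by
  ext a b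
  simp [Matrix.single, and_comm]

end RingLemmas2

section FieldLemmas

variable {n : Type*} [DecidableEq n] [Fintype n] {p : ℕ} [Fact p.Prime]

/-- A symplectic matrix mod `p` lifts to an integral symplectic matrix. -/
def Lifts (X : Matrix (n ⊕ n) (n ⊕ n) (ZMod p)) : Prop :=
  ∃ M : Matrix (n ⊕ n) (n ⊕ n) ℤ, M ∈ Matrix.symplecticGroup n ℤ ∧
    M.map (Int.cast : ℤ → ZMod p) = X

lemma lifts_mul {X Y : Matrix (n ⊕ n) (n ⊕ n) (ZMod p)} (hX : Lifts X) (hY : Lifts Y) :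
    Lifts (X * Y) := by
  obtain ⟨M, hM, hM2⟩ := hX
  obtain ⟨N, hN, hN2⟩ := hY
  refine ⟨M * N, mul_mem hM hN, ?_⟩
  rw [show (Int.cast : ℤ → ZMod p) = ⇑(Int.castRingHom (ZMod p)) from rfl, Matrix.map_mul]
  rw [← hM2, ← hN2]; rfl

lemma lifts_J : Lifts (Matrix.J n (ZMod p)) :=
  ⟨Matrix.J n ℤ, SymplecticGroup.J_mem n ℤ, J_map (Int.castRingHom (ZMod p))⟩

lemma exists_int_lift (S : Matrix n n (ZMod p)) (hS : Sᵀ = S) :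
    ∃ T : Matrix n n ℤ, Tᵀ = T ∧ T.map (Int.cast : ℤ → ZMod p) = S := by
  refine ⟨Matrix.of fun i j => ((S i j).val : ℤ), ?_, ?_⟩
  · ext a b
    have h2 : S b a = S a b := by
      conv_lhs => rw [show S = Sᵀ from hS.symm]
      simp [transpose_apply]
    simp [transpose_apply, h2]
  · ext a b
    simp only [Matrix.map_apply, Matrix.of_apply]
    push_cast
    simp [ZMod.natCast_val, ZMod.cast_id]

lemma lifts_E (S : Matrix n n (ZMod p)) (hS : Sᵀ = S) :
    Lifts (fromBlocks 1 S 0 1) := by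
  obtain ⟨T, hT, hT2⟩ := exists_int_lift S hS
  refine ⟨fromBlocks 1 T 0 1, E_mem T hT, ?_⟩
  rw [fromBlocks_map]
  rw [hT2, Matrix.map_one _ (by simp) (by simp), Matrix.map_zero _ (by simp)]

lemma lifts_F (S : Matrix n n (ZMod p)) (hS : Sᵀ = S) :
    Lifts (fromBlocks 1 0 S 1) := by
  obtain ⟨T, hT, hT2⟩ := exists_int_lift S hS
  refine ⟨fromBlocks 1 0 T 1, F_mem T hT, ?_⟩
  rw [fromBlocks_map]
  rw [hT2, Matrix.map_one _ (by simp) (by simp), Matrix.map_zero _ (by simp)]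

lemma lifts_Dsym (S : Matrix n n (ZMod p)) (hS : Sᵀ = S) (hU : IsUnit S.det) :
    Lifts (fromBlocks S 0 0 S⁻¹) := by
  have hS' : (-S⁻¹)ᵀ = -S⁻¹ := by
    rw [transpose_neg, transpose_nonsing_inv, hS]
  have w : fromBlocks 1 S 0 1 * fromBlocks 1 0 (-S⁻¹) 1 * fromBlocks 1 S 0 1 *
      Matrix.J n (ZMod p) = fromBlocks S 0 0 S⁻¹ := by
    rw [Matrix.J]
    simp only [fromBlocks_multiply, Matrix.mul_one, Matrix.one_mul, Matrix.mul_zero,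
      Matrix.zero_mul, Matrix.mul_neg, Matrix.neg_mul, mul_nonsing_inv _ hU,
      nonsing_inv_mul _ hU, add_zero, zero_add, Matrix.mul_one]
    simp [Matrix.mul_assoc, nonsing_inv_mul _ hU, Matrix.mul_one]
  have := lifts_mul (lifts_mul (lifts_mul (lifts_E S hS) (lifts_F (-S⁻¹) hS')) (lifts_E S hS))
    (lifts_J (n := n) (p := p))
  rwa [w] at this

lemma lifts_D (A : Matrix n n (ZMod p)) (hA : IsUnit A.det) :
    Lifts (fromBlocks A 0 0 (A⁻¹)ᵀ) := by
  have hdet : A.det ≠ 0 := by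
    simpa [isUnit_iff_ne_zero] using hA
  refine Matrix.diagonal_transvection_induction_of_det_ne_zero
    (fun B => Lifts (fromBlocks B 0 0 (B⁻¹)ᵀ)) A hdet ?_ ?_ ?_
  · intro D hD
    have h1 : (diagonal D)ᵀ = diagonal D := diagonal_transpose D
    have h2 : ((diagonal D)⁻¹)ᵀ = (diagonal D)⁻¹ := by
      rw [transpose_nonsing_inv, h1]
    rw [h2]
    exact lifts_Dsym _ h1 (isUnit_iff_ne_zero.mpr hD)
  · rintro ⟨i, j, hij, c⟩
    simp only [TransvectionStruct.toMatrix_mk]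
    set P : Matrix n n (ZMod p) := 1 - Matrix.single i i 1 - Matrix.single j j 1 +
      Matrix.single i j 1 + Matrix.single j i 1 with hPdef
    set Q : Matrix n n (ZMod p) := P + Matrix.single j j c with hQdef
    have hPt : Pᵀ = P := by
      simp only [hPdef, transpose_add, transpose_sub, transpose_one, stdBasis_transpose]
      abel
    have hQt : Qᵀ = Q := by
      simp only [hQdef, transpose_add, hPt, stdBasis_transpose]
    have hPP : P * P = 1 := by
      simp [hPdef, mul_add, add_mul, mul_sub, sub_mul, Matrix.mul_one, Matrix.one_mul,
        Matrix.single_mul_single_same, Matrix.single_mul_single_of_ne, hij, hij.symm, mul_one, one_mul]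
    have hQ : P * Matrix.transvection i j c = Q := by
      rw [Matrix.transvection, mul_add]
      have : P * Matrix.single i j c = Matrix.single j j c := by
        simp [hPdef, add_mul, sub_mul, Matrix.one_mul,
          Matrix.single_mul_single_same, Matrix.single_mul_single_of_ne, hij, hij.symm, mul_one, one_mul]
      rw [Matrix.mul_one, this, hQdef]
    have hPU : IsUnit P.det := IsUnit.of_mul_eq_one _ (by rw [← det_mul, hPP, det_one])
    have hQU : IsUnit Q.det := by
      rw [← hQ, det_mul, Matrix.det_transvection_of_ne i j hij c, mul_one]
      exact hPU
    have htPQ : Matrix.transvection i j c = P * Q := by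
      rw [← hQ, ← Matrix.mul_assoc, hPP, Matrix.one_mul]
    have hlift := lifts_mul (lifts_Dsym P hPt hPU) (lifts_Dsym Q hQt hQU)
    have heq : fromBlocks P 0 0 P⁻¹ * fromBlocks Q 0 0 Q⁻¹ =
        fromBlocks (Matrix.transvection i j c) 0 0 (((Matrix.transvection i j c))⁻¹)ᵀ := by
      rw [htPQ]
      have : ((P * Q)⁻¹)ᵀ = P⁻¹ * Q⁻¹ := by
        rw [Matrix.mul_inv_rev, transpose_mul, transpose_nonsing_inv, transpose_nonsing_inv,
          hPt, hQt]
      rw [this]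
      simp [fromBlocks_multiply]
    rwa [heq] at hlift
  · intro A B hA' hB' ihA ihB
    have hlift := lifts_mul ihA ihB
    have heq : fromBlocks A 0 0 (A⁻¹)ᵀ * fromBlocks B 0 0 (B⁻¹)ᵀ =
        fromBlocks (A * B) 0 0 (((A * B))⁻¹)ᵀ := by
      rw [Matrix.mul_inv_rev, transpose_mul]
      simp [fromBlocks_multiply]
    rwa [heq] at hlift

end FieldLemmas

section Coord
variable {K : Type*} [Field K] {m : Type*} [Fintype m] [DecidableEq m]

lemma exists_good_coords (W : Submodule K (m → K)) :
    ∃ I : Finset m,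
      (∀ x ∈ W, (∀ i ∈ I, x i = 0) → x = 0) ∧
      (∀ z : m → K, ∃ x ∈ W, ∀ i ∈ I, x i = z i) := by
  suffices h : ∀ (N : ℕ) (I : Finset m), I.card ≤ N →
      (∀ x ∈ W, (∀ i ∈ I, x i = 0) → x = 0) →
      ∃ I' : Finset m, (∀ x ∈ W, (∀ i ∈ I', x i = 0) → x = 0) ∧
        (∀ z : m → K, ∃ x ∈ W, ∀ i ∈ I', x i = z i) by
    refine h Finset.univ.card Finset.univ le_rfl ?_
    intro x _ h0
    funext i
    exact h0 i (Finset.mem_univ i)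
  intro N
  induction N with
  | zero =>
    intro I hcard hinj
    have hI : I = ∅ := Finset.card_eq_zero.mp (Nat.le_zero.mp hcard)
    subst hI
    refine ⟨∅, hinj, fun z => ⟨0, W.zero_mem, fun i hi => absurd hi (Finset.notMem_empty i)⟩⟩
  | succ N ih =>
    intro I hcard hinj
    by_cases hsurj : ∀ z : m → K, ∃ x ∈ W, ∀ i ∈ I, x i = z i
    · exact ⟨I, hinj, hsurj⟩
    push_neg at hsurj
    set C : Submodule K (m → K) :=
      { carrier := {z | ∀ i ∈ I, z i = 0}
        add_mem' := by intro a b ha hb i hi; simp [Pi.add_apply, ha i hi, hb i hi]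
        zero_mem' := by intro i _; rfl
        smul_mem' := by intro c a ha i hi; simp [Pi.smul_apply, ha i hi] } with hCdef
    have hVtop : W ⊔ C ≠ ⊤ := by
      intro htop
      obtain ⟨z, hz⟩ := hsurj
      have hzmem : z ∈ W ⊔ C := htop ▸ Submodule.mem_top
      obtain ⟨w, hw, c, hc, rfl⟩ := Submodule.mem_sup.mp hzmem
      obtain ⟨i, hiI, hne⟩ := hz w hw
      exact hne (by simp [Pi.add_apply, hc i hiI])
    obtain ⟨f, hf0, hfbot⟩ :=
      Submodule.exists_dual_map_eq_bot_of_lt_top (lt_top_iff_ne_top.mpr hVtop) inferInstance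
    have hfv : ∀ v ∈ W ⊔ C, f v = 0 := by
      intro v hv
      have : f v ∈ (W ⊔ C).map f := Submodule.mem_map_of_mem hv
      rwa [hfbot, Submodule.mem_bot] at this
    set cvec : m → K := fun i => f fun j => if i = j then 1 else 0 with hcvec
    have hfx : ∀ x : m → K, f x = ∑ i, x i * cvec i := by
      intro x
      rw [LinearMap.pi_apply_eq_sum_univ]
      simp [smul_eq_mul, hcvec]
    have hcsupp : ∀ i, i ∉ I → cvec i = 0 := by
      intro i hi
      apply hfv
      apply Submodule.mem_sup_right
      intro j hj
      have hne : i ≠ j := fun h => hi (h ▸ hj)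
      simp [hne]
    have hcne : ∃ j ∈ I, cvec j ≠ 0 := by
      by_contra hall
      push_neg at hall
      apply hf0
      apply LinearMap.ext
      intro x
      rw [hfx x, LinearMap.zero_apply]
      apply Finset.sum_eq_zero
      intro i _
      by_cases hiI : i ∈ I
      · rw [hall i hiI, mul_zero]
      · rw [hcsupp i hiI, mul_zero]
    obtain ⟨j, hjI, hcj⟩ := hcne
    have hinj' : ∀ x ∈ W, (∀ i ∈ I.erase j, x i = 0) → x = 0 := by
      intro x hxW hx0
      have hfx0 : f x = 0 := hfv x (Submodule.mem_sup_left hxW)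
      have hsum : f x = x j * cvec j := by
        rw [hfx x]
        apply Finset.sum_eq_single_of_mem j (Finset.mem_univ j)
        intro b _ hbj
        by_cases hbI : b ∈ I
        · rw [hx0 b (Finset.mem_erase.mpr ⟨hbj, hbI⟩), zero_mul]
        · rw [hcsupp b hbI, mul_zero]
      have hxj : x j = 0 := by
        rcases mul_eq_zero.mp (hsum ▸ hfx0) with h | h
        · exact h
        · exact absurd h hcj
      apply hinj x hxW
      intro i hiI
      rcases eq_or_ne i j with rfl | hij
      · exact hxj
      · exact hx0 i (Finset.mem_erase.mpr ⟨hij, hiI⟩)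
    refine ih (I.erase j) ?_ hinj'
    have := Finset.card_erase_of_mem hjI
    have hpos : 0 < I.card := Finset.card_pos.mpr ⟨j, hjI⟩
    omega

end Coord

section Rels
variable {n R : Type*} [DecidableEq n] [Fintype n] [CommRing R]

lemma sp_rels {N : Matrix (n ⊕ n) (n ⊕ n) R} (hN : N ∈ Matrix.symplecticGroup n R) :
    (N.toBlocks₁₁)ᵀ * N.toBlocks₂₁ = (N.toBlocks₂₁)ᵀ * N.toBlocks₁₁ ∧
    N.toBlocks₁₁ * (N.toBlocks₁₂)ᵀ = N.toBlocks₁₂ * (N.toBlocks₁₁)ᵀ ∧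
    (N.toBlocks₁₁)ᵀ * N.toBlocks₂₂ - (N.toBlocks₂₁)ᵀ * N.toBlocks₁₂ = 1 := by
  have hsplit : N = fromBlocks N.toBlocks₁₁ N.toBlocks₁₂ N.toBlocks₂₁ N.toBlocks₂₂ :=
    (fromBlocks_toBlocks N).symm
  have h1 := SymplecticGroup.mem_iff'.mp hN
  have h2 := SymplecticGroup.mem_iff.mp hN
  rw [hsplit, Matrix.J] at h1 h2
  simp only [fromBlocks_transpose, fromBlocks_multiply, Matrix.mul_zero, Matrix.zero_mul,
    Matrix.mul_one, Matrix.one_mul, Matrix.mul_neg, Matrix.neg_mul, add_zero, zero_add] at h1 h2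
  have e11 := congrArg Matrix.toBlocks₁₁ h1
  have e12 := congrArg Matrix.toBlocks₁₂ h1
  have f11 := congrArg Matrix.toBlocks₁₁ h2
  simp only [Matrix.toBlocks_fromBlocks₁₁, Matrix.toBlocks_fromBlocks₁₂] at e11 e12 f11
  refine ⟨?_, ?_, ?_⟩
  · exact (sub_eq_zero.mp (by rwa [sub_eq_add_neg])).symm
  · exact (sub_eq_zero.mp (by rwa [sub_eq_add_neg])).symm
  · have h : (N.toBlocks₁₁)ᵀ * N.toBlocks₂₂ - (N.toBlocks₂₁)ᵀ * N.toBlocks₁₂ =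
        -((N.toBlocks₂₁)ᵀ * N.toBlocks₁₂ + -((N.toBlocks₁₁)ᵀ * N.toBlocks₂₂)) := by abel
    rw [h, e12, neg_neg]

end Rels

section Chi
variable {n : Type*} [DecidableEq n] [Fintype n] {p : ℕ} [Fact p.Prime]

lemma exists_chi (N : Matrix (n ⊕ n) (n ⊕ n) (ZMod p))
    (hN : N ∈ Matrix.symplecticGroup n (ZMod p)) :
    ∃ χ : Matrix (n ⊕ n) (n ⊕ n) ℤ, χ ∈ Matrix.symplecticGroup n ℤ ∧
      IsUnit (((χ.map (Int.cast : ℤ → ZMod p)) * N).toBlocks₁₁).det := by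
  classical
  set A := N.toBlocks₁₁ with hA
  set C := N.toBlocks₂₁ with hC
  have hIso : Aᵀ * C = Cᵀ * A := (sp_rels hN).1
  set W : Submodule (ZMod p) (n → ZMod p) :=
    Submodule.map C.mulVecLin (LinearMap.ker A.mulVecLin) with hW
  obtain ⟨I, hInj, hSurj⟩ := exists_good_coords W
  set aZ : n → ℤ := fun i => if i ∈ I then 0 else 1 with haZ
  set bZ : n → ℤ := fun i => if i ∈ I then 1 else 0 with hbZ
  set cZ : n → ℤ := fun i => if i ∈ I then -1 else 0 with hcZ
  have hdet1 : ∀ i, aZ i * aZ i - bZ i * cZ i = 1 := by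
    intro i
    by_cases hi : i ∈ I <;> simp [haZ, hbZ, hcZ, hi]
  refine ⟨fromBlocks (diagonal aZ) (diagonal bZ) (diagonal cZ) (diagonal aZ),
    chi_mem aZ bZ cZ aZ hdet1, ?_⟩
  set ak : n → ZMod p := fun i => ((aZ i : ℤ) : ZMod p) with hak
  set bk : n → ZMod p := fun i => ((bZ i : ℤ) : ZMod p) with hbk
  set ck : n → ZMod p := fun i => ((cZ i : ℤ) : ZMod p) with hck
  have hdmap : ∀ f : n → ℤ, (diagonal f).map (Int.cast : ℤ → ZMod p) =
      diagonal (fun i => ((f i : ℤ) : ZMod p)) := fun f => Matrix.diagonal_map (by simp)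
  have hmap : (fromBlocks (diagonal aZ) (diagonal bZ) (diagonal cZ) (diagonal aZ)).map
      (Int.cast : ℤ → ZMod p) =
      fromBlocks (diagonal ak) (diagonal bk) (diagonal ck) (diagonal ak) := by
    rw [fromBlocks_map, hdmap, hdmap, hdmap]
  have hblock : ((fromBlocks (diagonal aZ) (diagonal bZ) (diagonal cZ) (diagonal aZ)).map
      (Int.cast : ℤ → ZMod p) * N).toBlocks₁₁ = diagonal ak * A + diagonal bk * C := by
    have hsplit : N = fromBlocks N.toBlocks₁₁ N.toBlocks₁₂ N.toBlocks₂₁ N.toBlocks₂₂ :=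
      (fromBlocks_toBlocks N).symm
    rw [hmap]
    conv_lhs => rw [hsplit]
    rw [fromBlocks_multiply, Matrix.toBlocks_fromBlocks₁₁, ← hA, ← hC]
  rw [hblock]
  rw [isUnit_iff_ne_zero]
  intro hdet0
  obtain ⟨v, hv0, hvker⟩ := (Matrix.exists_mulVec_eq_zero_iff).mpr hdet0
  set x : n → ZMod p := A.mulVec v with hx
  set y : n → ZMod p := C.mulVec v with hy
  have hcomp : ∀ i, ak i * x i + bk i * y i = 0 := by
    intro i
    have := congrFun hvker i
    rw [Matrix.add_mulVec, Pi.add_apply, ← Matrix.mulVec_mulVec, ← Matrix.mulVec_mulVec,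
      Matrix.mulVec_diagonal, Matrix.mulVec_diagonal] at this
    exact this
  have hxI : ∀ i, i ∉ I → x i = 0 := by
    intro i hi
    have h0 := hcomp i
    rw [hak, hbk, haZ, hbZ] at h0
    simp only [hi, if_false, if_neg, Int.cast_one, Int.cast_zero, one_mul, zero_mul,
      add_zero] at h0
    simpa using h0
  have hyI : ∀ i, i ∈ I → y i = 0 := by
    intro i hi
    have h0 := hcomp i
    rw [hak, hbk, haZ, hbZ] at h0
    simp only [hi, if_true, Int.cast_one, Int.cast_zero, one_mul, zero_mul, zero_add] at h0
    simpa using h0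
  have hxW : ∀ u ∈ W, x ⬝ᵥ u = 0 := by
    rintro u ⟨w, hw, rfl⟩
    have hw' : A.mulVec w = 0 := by simpa using hw
    simp only [Matrix.mulVecLin_apply]
    have step : x ⬝ᵥ C.mulVec w = v ⬝ᵥ ((Aᵀ * C).mulVec w) := by
      rw [hx, ← Matrix.vecMul_transpose, ← Matrix.dotProduct_mulVec, Matrix.mulVec_mulVec]
    rw [step, hIso, ← Matrix.mulVec_mulVec, hw', Matrix.mulVec_zero, dotProduct_zero]
  have hx0 : x = 0 := by
    funext i
    by_cases hi : i ∈ I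
    · obtain ⟨u, huW, huI⟩ := hSurj (Pi.single i 1)
      have h0 := hxW u huW
      rw [dotProduct, Finset.sum_eq_single_of_mem i (Finset.mem_univ i)] at h0
      · rw [huI i hi, Pi.single_eq_same, mul_one] at h0
        exact h0
      · intro b _ hbi
        by_cases hbI : b ∈ I
        · rw [huI b hbI, Pi.single_eq_of_ne hbi, mul_zero]
        · rw [hxI b hbI, zero_mul]
    · exact hxI i hi
  have hyW : y ∈ W := ⟨v, by simpa using hx0, by simp [hy]⟩
  have hy0 : y = 0 := hInj y hyW (fun i hi => hyI i hi)
  have hNdet : IsUnit N.det := SymplecticGroup.symplectic_det hN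
  have hNv : N.mulVec (Sum.elim v 0) = 0 := by
    have hsplit : N = fromBlocks N.toBlocks₁₁ N.toBlocks₁₂ N.toBlocks₂₁ N.toBlocks₂₂ :=
      (fromBlocks_toBlocks N).symm
    conv_lhs => rw [hsplit]
    rw [Matrix.fromBlocks_mulVec]
    simp only [Sum.elim_comp_inl, Sum.elim_comp_inr, Matrix.mulVec_zero, add_zero]
    rw [← hA, ← hC, ← hx, ← hy, hx0, hy0]
    simp
  have hker : ∃ u ≠ 0, N.mulVec u = 0 := by
    refine ⟨Sum.elim v 0, ?_, hNv⟩
    intro h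
    apply hv0
    funext i
    exact congrFun h (Sum.inl i)
  rw [Matrix.exists_mulVec_eq_zero_iff] at hker
  rw [hker] at hNdet
  exact (isUnit_iff_ne_zero.mp hNdet) rfl

end Chi

section Final
variable {n : Type*} [DecidableEq n] [Fintype n] {p : ℕ} [Fact p.Prime]

lemma cast_map_mul (M N : Matrix (n ⊕ n) (n ⊕ n) ℤ) :
    (M * N).map (Int.cast : ℤ → ZMod p) =
      M.map (Int.cast : ℤ → ZMod p) * N.map (Int.cast : ℤ → ZMod p) := by
  ext i j
  simp [Matrix.map_apply, Matrix.mul_apply]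

lemma cast_J : (Matrix.J n ℤ).map (Int.cast : ℤ → ZMod p) = Matrix.J n (ZMod p) :=
  J_map (Int.castRingHom (ZMod p))

lemma lifts_of_sp (N : Matrix (n ⊕ n) (n ⊕ n) (ZMod p))
    (hN : N ∈ Matrix.symplecticGroup n (ZMod p)) : Lifts N := by
  obtain ⟨χ, hχSp, hχdet⟩ := exists_chi N hN
  set χk := χ.map (Int.cast : ℤ → ZMod p) with hχk
  have hχkSp : χk ∈ Matrix.symplecticGroup n (ZMod p) :=
    map_sp_mem (Int.castRingHom (ZMod p)) hχSp
  set N' := χk * N with hN'def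
  have hN'Sp : N' ∈ Matrix.symplecticGroup n (ZMod p) := mul_mem hχkSp hN
  set A := N'.toBlocks₁₁ with hA
  set B := N'.toBlocks₁₂ with hB
  set C := N'.toBlocks₂₁ with hC
  set D := N'.toBlocks₂₂ with hD
  obtain ⟨hIso, hABt, hAD⟩ := sp_rels hN'Sp
  rw [← hA, ← hC] at hIso
  rw [← hA, ← hB] at hABt
  rw [← hA, ← hB, ← hC, ← hD] at hAD
  have hAU : IsUnit A.det := hχdet
  have hAtU : IsUnit (Aᵀ).det := by rwa [Matrix.det_transpose]
  set S := A⁻¹ * B with hS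
  set T := C * A⁻¹ with hT
  have hSt : Sᵀ = S := by
    have e2 : A * (Bᵀ * (Aᵀ)⁻¹) = B := by
      rw [← Matrix.mul_assoc, hABt, Matrix.mul_nonsing_inv_cancel_right _ _ hAtU]
    calc Sᵀ = Bᵀ * (Aᵀ)⁻¹ := by rw [hS, transpose_mul, transpose_nonsing_inv]
      _ = A⁻¹ * (A * (Bᵀ * (Aᵀ)⁻¹)) := (Matrix.nonsing_inv_mul_cancel_left _ _ hAU).symm
      _ = A⁻¹ * B := by rw [e2]
      _ = S := hS.symm
  have hTt : Tᵀ = T := by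
    have e4 : (Aᵀ)⁻¹ * Cᵀ * A = C := by
      rw [Matrix.mul_assoc, ← hIso, Matrix.nonsing_inv_mul_cancel_left _ _ hAtU]
    calc Tᵀ = (Aᵀ)⁻¹ * Cᵀ := by rw [hT, transpose_mul, transpose_nonsing_inv]
      _ = (Aᵀ)⁻¹ * Cᵀ * A * A⁻¹ := (Matrix.mul_nonsing_inv_cancel_right _ _ hAU).symm
      _ = C * A⁻¹ := by rw [e4]
      _ = T := hT.symm
  have hTA : T * A = C := by rw [hT, Matrix.nonsing_inv_mul_cancel_right _ _ hAU]
  have hAS : A * S = B := by rw [hS, Matrix.mul_nonsing_inv_cancel_left _ _ hAU]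
  have hinvT : (Aᵀ)⁻¹ * Cᵀ = T := by
    rw [← transpose_nonsing_inv, ← transpose_mul, ← hT]
    exact hTt
  have hDeq : C * S + (A⁻¹)ᵀ = D := by
    have h1 : Aᵀ * D = 1 + Cᵀ * B := by rw [← hAD]; abel
    calc C * S + (A⁻¹)ᵀ = T * A * S + (Aᵀ)⁻¹ := by rw [hTA, transpose_nonsing_inv]
      _ = T * B + (Aᵀ)⁻¹ := by rw [Matrix.mul_assoc, hAS]
      _ = (Aᵀ)⁻¹ * Cᵀ * B + (Aᵀ)⁻¹ := by rw [hinvT]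
      _ = (Aᵀ)⁻¹ * (1 + Cᵀ * B) := by
          rw [Matrix.mul_add, Matrix.mul_one, Matrix.mul_assoc]
          exact add_comm _ _
      _ = (Aᵀ)⁻¹ * (Aᵀ * D) := by rw [h1]
      _ = D := Matrix.nonsing_inv_mul_cancel_left _ _ hAtU
  have hdecomp : fromBlocks 1 0 T 1 * fromBlocks A 0 0 (A⁻¹)ᵀ * fromBlocks 1 S 0 1 = N' := by
    rw [fromBlocks_multiply, fromBlocks_multiply]
    simp only [Matrix.mul_one, Matrix.one_mul, Matrix.mul_zero, Matrix.zero_mul,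
      add_zero, zero_add]
    rw [hTA, hAS, hDeq]
    rw [hA, hB, hC, hD]
    exact fromBlocks_toBlocks N'
  have hLift := lifts_mul (lifts_mul (lifts_F T hTt) (lifts_D A hAU)) (lifts_E S hSt)
  rw [hdecomp] at hLift
  obtain ⟨M', hM'Sp, hM'map⟩ := hLift
  set χinv := (-Matrix.J n ℤ) * χᵀ * Matrix.J n ℤ with hχinv
  have hχinvSp : χinv ∈ Matrix.symplecticGroup n ℤ :=
    mul_mem (mul_mem (SymplecticGroup.neg_mem (SymplecticGroup.J_mem n ℤ))
      (SymplecticGroup.transpose_mem hχSp)) (SymplecticGroup.J_mem n ℤ)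
  refine ⟨χinv * M', mul_mem hχinvSp hM'Sp, ?_⟩
  rw [cast_map_mul, hM'map]
  have hmapinv : χinv.map (Int.cast : ℤ → ZMod p) =
      (-Matrix.J n (ZMod p)) * χkᵀ * Matrix.J n (ZMod p) := by
    rw [hχinv]
    rw [cast_map_mul, cast_map_mul]
    have hnegJ : (-Matrix.J n ℤ).map (Int.cast : ℤ → ZMod p) = -Matrix.J n (ZMod p) := by
      have hh : (-Matrix.J n ℤ).map (Int.cast : ℤ → ZMod p) =
          -((Matrix.J n ℤ).map (Int.cast : ℤ → ZMod p)) := by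
        ext i j
        simp [Matrix.map_apply]
      rw [hh, cast_J]
    rw [hnegJ, transpose_map, cast_J]
  rw [hmapinv, hN'def]
  have hcancel : (-Matrix.J n (ZMod p)) * χkᵀ * Matrix.J n (ZMod p) * χk = 1 := by
    have h := SymplecticGroup.inv_left_mul_aux hχkSp
    rw [← h]
    simp only [Matrix.neg_mul, Matrix.mul_assoc]
  rw [← Matrix.mul_assoc, hcancel, Matrix.one_mul]

end Final

/-- The reduction-mod-p homomorphism `Sp(2g, ℤ) → Sp(2g, ℤ/pℤ)` (entrywise reduction)
is surjective. -/
theorem sp_mod_p_surjective (p : ℕ) (hp : p.Prime) (g : ℕ) (hg : 0 < g)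
    (N : Matrix (Fin g ⊕ Fin g) (Fin g ⊕ Fin g) (ZMod p))
    (hN : N ∈ Matrix.symplecticGroup (Fin g) (ZMod p)) :
    ∃ M : Matrix (Fin g ⊕ Fin g) (Fin g ⊕ Fin g) ℤ,
      M ∈ Matrix.symplecticGroup (Fin g) ℤ ∧
      M.map (Int.cast : ℤ → ZMod p) = N := by
  haveI := Fact.mk hp
  exact lifts_of_sp N hN
end

section
/- Let p be a prime, g a positive integer, and let φ : ℤ^{2g} → (ℤ/pℤ)^{2g} be componentwise reduction mod p. Equip ℤ^{2g} with the standard unimodular symplectic form ω and (ℤ/pℤ)^{2g} with its mod-p reduction. Then for every Lagrangian subspace A ⊆ (ℤ/pℤ)^{2g} (i.e. a g-dimensional subspace on which the reduced form vanishes), there exists a ℤ-Lagrangian B ⊆ ℤ^{2g} (a submodule on which ω vanishes identically with ℤ^{2g}/B ≅ ℤ^g) such that φ(B) = A. -/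
open Submodule

/-- Every subspace of `n → k` admits a complement spanned by a subset of the
standard coordinate vectors: there is a set `S` of coordinates such that the
projection to the `S`-coordinates is bijective from `W` onto `S → k`. -/
lemma exists_coord_transversal {k : Type*} [Field k] {n : Type*} [Fintype n] [DecidableEq n]
    (W : Submodule k (n → k)) :
    ∃ S : Set n, (∀ w ∈ W, (∀ i ∈ S, w i = 0) → w = 0) ∧
      (∀ c : n → k, ∃ w ∈ W, ∀ i ∈ S, w i = c i) := by
  classical
  obtain ⟨s, hsW, hspan, hli⟩ := exists_linearIndependent k (W : Set (n → k))
  have hspan' : Submodule.span k s = W := by rw [hspan, Submodule.span_eq]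
  obtain ⟨b, hbt, hsb, htb, hbli⟩ :=
    exists_linearIndepOn_id_extension (t := s ∪ Set.range (fun i : n => (Pi.single i 1 : n → k)))
      hli (Set.subset_union_left)
  set S' : Set n := {i : n | (Pi.single i 1 : n → k) ∈ b \ s} with hS'
  set U : Submodule k (n → k) := Submodule.span k (b \ s) with hU
  -- every element of `b \ s` is a standard basis vector indexed by `S'`
  have hbs_single : ∀ v ∈ b \ s, ∃ j ∈ S', v = (Pi.single j 1 : n → k) := by
    rintro v ⟨hvb, hvs⟩
    rcases (Set.mem_union _ _ _).mp (hbt hvb) with h | ⟨j, rfl⟩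
    · exact absurd h hvs
    · exact ⟨j, ⟨hvb, hvs⟩, rfl⟩
  -- U consists of vectors supported on S'
  have hUsupp : ∀ x ∈ U, ∀ i, i ∉ S' → x i = 0 := by
    intro x hx i hi
    have : U ≤ Submodule.comap (LinearMap.proj (R := k) (φ := fun _ : n => k) i) ⊥ := by
      rw [hU, Submodule.span_le]
      rintro v hv
      obtain ⟨j, hj, rfl⟩ := hbs_single v hv
      have : i ≠ j := fun h => hi (h ▸ hj)
      rw [SetLike.mem_coe, Submodule.mem_comap, Submodule.mem_bot]
      simp [Pi.single_apply, this]
    have h := this hx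
    rw [Submodule.mem_comap, Submodule.mem_bot] at h
    simpa using h
  -- vectors supported on S' are in U
  have hsuppU : ∀ x : n → k, (∀ i, i ∉ S' → x i = 0) → x ∈ U := by
    intro x hx
    have hx' : x = ∑ i : n, Pi.single i (x i) := (Finset.univ_sum_single x).symm
    rw [hx']
    refine Submodule.sum_mem _ fun i _ => ?_
    by_cases hi : i ∈ S'
    · have h1 : (Pi.single i (x i) : n → k) = x i • (Pi.single i (1:k) : n → k) := by
        funext m; simp [Pi.single_apply]
      rw [h1]
      exact Submodule.smul_mem _ _ (Submodule.subset_span hi)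
    · rw [hx i hi]
      simp
  -- W ⊔ U = ⊤
  have htop : W ⊔ U = ⊤ := by
    rw [← hspan', hU, ← Submodule.span_union, Set.union_diff_cancel hsb]
    rw [eq_top_iff]
    intro x _
    have hx' : x = ∑ i : n, Pi.single i (x i) := (Finset.univ_sum_single x).symm
    rw [hx']
    refine Submodule.sum_mem _ fun i _ => ?_
    have h1 : (Pi.single i (x i) : n → k) = x i • (Pi.single i (1:k) : n → k) := by
      funext m; simp [Pi.single_apply]
    rw [h1]
    refine Submodule.smul_mem _ _ ?_
    exact Submodule.span_le.mpr htb (Submodule.subset_span (Set.mem_union_right _ ⟨i, rfl⟩))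
  -- W and U are disjoint
  have hdisj : Disjoint W U := by
    have h := LinearIndependent.disjoint_span_image (v := (Subtype.val : b → (n → k))) hbli (s := {x : b | (x : n → k) ∈ s})
      (t := {x : b | (x : n → k) ∈ s}ᶜ) disjoint_compl_right
    have him1 : (Subtype.val : b → (n → k)) '' {x : b | (x : n → k) ∈ s} = s := by
      ext v; constructor
      · rintro ⟨⟨v, hv⟩, hvs, rfl⟩; exact hvs
      · intro hv; exact ⟨⟨v, hsb hv⟩, hv, rfl⟩
    have him2 : (Subtype.val : b → (n → k)) '' {x : b | (x : n → k) ∈ s}ᶜ = b \ s := by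
      ext v; constructor
      · rintro ⟨⟨v, hv⟩, hvs, rfl⟩; exact ⟨hv, hvs⟩
      · rintro ⟨hvb, hvs⟩; exact ⟨⟨v, hvb⟩, hvs, rfl⟩
    rw [him1, him2, hspan'] at h
    exact h
  refine ⟨S'ᶜ, ?_, ?_⟩
  · intro w hw hwz
    have hwU : w ∈ U := hsuppU w fun i hi => hwz i hi
    have := Submodule.disjoint_def.mp hdisj w hw hwU
    exact this
  · intro c
    have hc : c ∈ W ⊔ U := htop ▸ Submodule.mem_top
    obtain ⟨w, hw, u, hu, rfl⟩ := Submodule.mem_sup.mp hc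
    refine ⟨w, hw, fun i hi => ?_⟩
    have := hUsupp u hu i hi
    simp [this]

set_option maxHeartbeats 1000000 in
/-- Every Lagrangian subspace of `(ℤ/pℤ)^{2g}` (w.r.t. the mod-p reduction of the
standard symplectic form `ω` on `ℤ^{2g}`) is the image under componentwise mod-p
reduction of a `ℤ`-Lagrangian `B ⊆ ℤ^{2g}` (a submodule with `ω|_B ≡ 0` and
`ℤ^{2g}/B ≅ ℤ^g`). -/
theorem lagrangian_lifts_mod_p (p : ℕ) (hp : p.Prime) (g : ℕ) (hg : 0 < g)
    (ω : ((Fin g ⊕ Fin g) → ℤ) → ((Fin g ⊕ Fin g) → ℤ) → ℤ)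
    (hω : ∀ x y, ω x y =
      ∑ i : Fin g, (x (Sum.inl i) * y (Sum.inr i) - x (Sum.inr i) * y (Sum.inl i)))
    (ωp : ((Fin g ⊕ Fin g) → ZMod p) → ((Fin g ⊕ Fin g) → ZMod p) → ZMod p)
    (hωp : ∀ x y, ωp x y =
      ∑ i : Fin g, (x (Sum.inl i) * y (Sum.inr i) - x (Sum.inr i) * y (Sum.inl i)))
    (φ : ((Fin g ⊕ Fin g) → ℤ) →ₗ[ℤ] ((Fin g ⊕ Fin g) → ZMod p))
    (hφ : ∀ x i, φ x i = (x i : ZMod p))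
    (A : Submodule (ZMod p) ((Fin g ⊕ Fin g) → ZMod p))
    (hAdim : Module.finrank (ZMod p) A = g)
    (hAiso : ∀ x ∈ A, ∀ y ∈ A, ωp x y = 0) :
    ∃ B : Submodule ℤ ((Fin g ⊕ Fin g) → ℤ),
      (∀ x ∈ B, ∀ y ∈ B, ω x y = 0) ∧
      Nonempty ((((Fin g ⊕ Fin g) → ℤ) ⧸ B) ≃ₗ[ℤ] (Fin g → ℤ)) ∧
      B.map φ = A.restrictScalars ℤ := by
  classical
  haveI : Fact p.Prime := ⟨hp⟩
  -- the subspace of vectors vanishing on all `inl` coordinates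
  set F : Submodule (ZMod p) ((Fin g ⊕ Fin g) → ZMod p) :=
    { carrier := {x | ∀ j, x (Sum.inl j) = 0}
      add_mem' := fun {x y} hx hy j => by
        simp only [Pi.add_apply, hx j, hy j, add_zero]
      zero_mem' := fun j => rfl
      smul_mem' := fun c x hx j => by
        simp only [Pi.smul_apply, hx j, smul_zero] } with hF
  obtain ⟨S₀, hS₀inj, hS₀surj⟩ := exists_coord_transversal (A ⊓ F)
  set S : Set (Fin g) := {i | Sum.inr i ∈ S₀} with hS
  have hS₀noinl : ∀ j, Sum.inl j ∉ S₀ := by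
    intro j hj
    obtain ⟨w, hw, hwc⟩ := hS₀surj (fun _ => 1)
    have h0 : w (Sum.inl j) = 0 := hw.2 j
    have h1 : w (Sum.inl j) = 1 := hwc _ hj
    exact one_ne_zero (h1 ▸ h0)
  have hinj' : ∀ x ∈ A, (∀ j, x (Sum.inl j) = 0) → (∀ i ∈ S, x (Sum.inr i) = 0) → x = 0 := by
    intro x hxA hxF hxS
    refine hS₀inj x ⟨hxA, hxF⟩ fun t ht => ?_
    cases t with
    | inl j => exact hxF j
    | inr i => exact hxS i ht
  have hsurj' : ∀ cc : Fin g → ZMod p,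
      ∃ w ∈ A, (∀ j, w (Sum.inl j) = 0) ∧ ∀ i ∈ S, w (Sum.inr i) = cc i := by
    intro cc
    obtain ⟨w, hw, hwc⟩ := hS₀surj (Sum.elim 0 cc)
    exact ⟨w, hw.1, hw.2, fun i hi => hwc _ hi⟩
  -- the "domain" and "codomain" coordinate choices
  set dd : Fin g → Fin g ⊕ Fin g := fun i => if i ∈ S then Sum.inr i else Sum.inl i with hdd
  set cc : Fin g → Fin g ⊕ Fin g := fun i => if i ∈ S then Sum.inl i else Sum.inr i with hcc
  have hddS : ∀ i, i ∈ S → dd i = Sum.inr i := fun i hi => by rw [hdd]; exact if_pos hi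
  have hddSc : ∀ i, i ∉ S → dd i = Sum.inl i := fun i hi => by rw [hdd]; exact if_neg hi
  have hccS : ∀ i, i ∈ S → cc i = Sum.inl i := fun i hi => by rw [hcc]; exact if_pos hi
  have hccSc : ∀ i, i ∉ S → cc i = Sum.inr i := fun i hi => by rw [hcc]; exact if_neg hi
  -- key transversality: A meets the coordinate Lagrangian `{x | x ∘ dd = 0}` trivially
  have hkey : ∀ x ∈ A, (∀ i, x (dd i) = 0) → x = 0 := by
    intro x hxA hxd
    have hxdS : ∀ i ∈ S, x (Sum.inr i) = 0 := fun i hi => by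
      have := hxd i; rwa [hddS i hi] at this
    have hxdSc : ∀ i, i ∉ S → x (Sum.inl i) = 0 := fun i hi => by
      have := hxd i; rwa [hddSc i hi] at this
    have hstep : ∀ i₀ ∈ S, x (Sum.inl i₀) = 0 := by
      intro i₀ hi₀
      obtain ⟨w, hwA, hwF, hwS⟩ := hsurj' (Pi.single i₀ 1)
      have h0 := hAiso x hxA w hwA
      rw [hωp] at h0
      have h1 : ∀ i : Fin g, x (Sum.inl i) * w (Sum.inr i) - x (Sum.inr i) * w (Sum.inl i)
          = x (Sum.inl i) * w (Sum.inr i) := fun i => by rw [hwF i, mul_zero, sub_zero]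
      rw [Finset.sum_congr rfl fun i _ => h1 i] at h0
      rw [Finset.sum_eq_single i₀ ?h ?hh] at h0
      · rw [hwS i₀ hi₀, Pi.single_eq_same, mul_one] at h0
        exact h0
      case h =>
        intro b _ hb
        by_cases hbS : b ∈ S
        · rw [hwS b hbS, Pi.single_eq_of_ne hb, mul_zero]
        · rw [hxdSc b hbS, zero_mul]
      case hh =>
        intro h; exact absurd (Finset.mem_univ _) h
    refine hinj' x hxA (fun j => ?_) hxdS
    by_cases hj : j ∈ S
    · exact hstep j hj
    · exact hxdSc j hj
  -- the projection `A → (Fin g → ZMod p)` onto `dd`-coordinates is bijective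
  set π : ((Fin g ⊕ Fin g) → ZMod p) →ₗ[ZMod p] (Fin g → ZMod p) :=
    LinearMap.funLeft (ZMod p) (ZMod p) dd with hπ
  set πA : A →ₗ[ZMod p] (Fin g → ZMod p) := π.comp A.subtype with hπA
  have hπinj : Function.Injective πA := by
    refine (injective_iff_map_eq_zero πA).mpr ?_
    rintro ⟨x, hx⟩ h
    exact Subtype.ext (hkey x hx fun i => congrFun h i)
  have hfr : Module.finrank (ZMod p) A = Module.finrank (ZMod p) (Fin g → ZMod p) := by
    rw [hAdim, Module.finrank_pi, Fintype.card_fin]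
  have hπsurj : Function.Surjective πA :=
    (LinearMap.injective_iff_surjective_of_finrank_eq_finrank hfr).mp hπinj
  set e : A ≃ₗ[ZMod p] (Fin g → ZMod p) := LinearEquiv.ofBijective πA ⟨hπinj, hπsurj⟩ with he
  set ψ := e.symm with hψ
  have hψd : ∀ (u : Fin g → ZMod p) (j : Fin g),
      ((ψ u : A) : (Fin g ⊕ Fin g) → ZMod p) (dd j) = u j := by
    intro u j
    have h := e.apply_symm_apply u
    have h2 : e (ψ u) = ((ψ u : A) : (Fin g ⊕ Fin g) → ZMod p) ∘ dd := rfl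
    rw [h2] at h
    exact congrFun h j
  set Mp : Fin g → Fin g → ZMod p :=
    fun i j => ((ψ (Pi.single j 1) : A) : (Fin g ⊕ Fin g) → ZMod p) (cc i) with hMp
  -- every element of A is a "graph" over the dd-coordinates
  have hA1 : ∀ a, a ∈ A → ∀ i, a (cc i) = ∑ j, Mp i j * a (dd j) := by
    intro a ha i
    set u : Fin g → ZMod p := fun j => a (dd j) with hu
    have h1 : ψ u = ⟨a, ha⟩ := by
      rw [hψ, LinearEquiv.symm_apply_eq]
      funext j
      rfl
    have h2 : u = ∑ j, u j • (Pi.single j (1 : ZMod p) : Fin g → ZMod p) := by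
      funext m
      rw [Finset.sum_apply]
      simp [Pi.single_apply, Finset.sum_ite_eq']
    have h3 : a (cc i) = ((ψ u : A) : (Fin g ⊕ Fin g) → ZMod p) (cc i) := by rw [h1]
    rw [h3, h2, map_sum]
    have h4 : ∀ j : Fin g, ψ (u j • (Pi.single j (1 : ZMod p) : Fin g → ZMod p)) = u j • ψ (Pi.single j 1) := by
      intro j; exact map_smul ψ _ _
    rw [Finset.sum_congr rfl fun j _ => h4 j]
    rw [Submodule.coe_sum]
    rw [Finset.sum_apply]
    refine Finset.sum_congr rfl fun j _ => ?_
    simp only [SetLike.val_smul, Pi.smul_apply, smul_eq_mul]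
    rw [mul_comm]
  have hA2 : ∀ z : (Fin g ⊕ Fin g) → ZMod p,
      (∀ i, z (cc i) = ∑ j, Mp i j * z (dd j)) → z ∈ A := by
    intro z hz
    set u : Fin g → ZMod p := fun j => z (dd j) with hu
    have hmem := (ψ u : A).2
    set a : (Fin g ⊕ Fin g) → ZMod p := ((ψ u : A) : (Fin g ⊕ Fin g) → ZMod p) with ha
    have had : ∀ j, a (dd j) = z (dd j) := fun j => hψd u j
    have hac : ∀ i, a (cc i) = ∑ j, Mp i j * a (dd j) := fun i => hA1 a (ψ u).2 i
    have hza : z = a := by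
      funext t
      have key : ∀ i : Fin g, z (dd i) = a (dd i) ∧ z (cc i) = a (cc i) := by
        intro i
        refine ⟨(had i).symm, ?_⟩
        rw [hz i, hac i]
        exact Finset.sum_congr rfl fun j _ => by rw [had j]
      cases t with
      | inl i =>
        by_cases hi : i ∈ S
        · have := (key i).2; rwa [hccS i hi] at this
        · have := (key i).1; rwa [hddSc i hi] at this
      | inr i =>
        by_cases hi : i ∈ S
        · have := (key i).1; rwa [hddS i hi] at this
        · have := (key i).2; rwa [hccSc i hi] at this
    rw [hza]; exact hmem
  -- signs
  set εk : Fin g → ZMod p := fun i => if i ∈ S then 1 else -1 with hεk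
  set εz : Fin g → ℤ := fun i => if i ∈ S then 1 else -1 with hεz
  have hεz2 : ∀ i, εz i * εz i = 1 := by
    intro i; rw [hεz]; by_cases hi : i ∈ S <;> simp [hi]
  have hεcast : ∀ i, ((εz i : ℤ) : ZMod p) = εk i := by
    intro i; rw [hεz, hεk]; by_cases hi : i ∈ S <;> simp [hi]
  have hεk2 : ∀ i, εk i * εk i = 1 := by
    intro i; rw [hεk]; by_cases hi : i ∈ S <;> simp [hi]
  -- symmetry of the twisted matrix
  have hNsym : ∀ s' t' : Fin g, εk s' * Mp s' t' = εk t' * Mp t' s' := by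
    intro s' t'
    have h0 := hAiso _ (ψ (Pi.single s' (1 : ZMod p)) : A).2 _ (ψ (Pi.single t' (1 : ZMod p)) : A).2
    rw [hωp] at h0
    set a : (Fin g ⊕ Fin g) → ZMod p :=
      ((ψ (Pi.single s' (1 : ZMod p)) : A) : (Fin g ⊕ Fin g) → ZMod p) with haa
    set b : (Fin g ⊕ Fin g) → ZMod p :=
      ((ψ (Pi.single t' (1 : ZMod p)) : A) : (Fin g ⊕ Fin g) → ZMod p) with hbb
    have hterm : ∀ i : Fin g, a (Sum.inl i) * b (Sum.inr i) - a (Sum.inr i) * b (Sum.inl i)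
        = εk i * (Mp i s' * (Pi.single t' (1 : ZMod p) : Fin g → ZMod p) i)
          - εk i * ((Pi.single s' (1 : ZMod p) : Fin g → ZMod p) i * Mp i t') := by
      intro i
      have hMa : a (cc i) = Mp i s' := rfl
      have hMb : b (cc i) = Mp i t' := rfl
      have hda : a (dd i) = (Pi.single s' (1 : ZMod p) : Fin g → ZMod p) i := hψd _ i
      have hdb : b (dd i) = (Pi.single t' (1 : ZMod p) : Fin g → ZMod p) i := hψd _ i
      by_cases hi : i ∈ S
      · rw [show Sum.inl i = cc i from (hccS i hi).symm,
          show Sum.inr i = dd i from (hddS i hi).symm,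
          hMa, hMb, hda, hdb, show εk i = 1 by rw [hεk]; exact if_pos hi]
        ring
      · rw [show Sum.inl i = dd i from (hddSc i hi).symm,
          show Sum.inr i = cc i from (hccSc i hi).symm,
          hMa, hMb, hda, hdb, show εk i = -1 by rw [hεk]; exact if_neg hi]
        ring
    rw [Finset.sum_congr rfl fun i _ => hterm i, Finset.sum_sub_distrib] at h0
    have e1 : ∑ i, εk i * (Mp i s' * (Pi.single t' (1 : ZMod p) : Fin g → ZMod p) i)
        = εk t' * Mp t' s' := by
      rw [Finset.sum_eq_single t']
      · rw [Pi.single_eq_same, mul_one]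
      · intro b' _ hb'; rw [Pi.single_eq_of_ne hb', mul_zero, mul_zero]
      · intro h; exact absurd (Finset.mem_univ _) h
    have e2 : ∑ i, εk i * ((Pi.single s' (1 : ZMod p) : Fin g → ZMod p) i * Mp i t')
        = εk s' * Mp s' t' := by
      rw [Finset.sum_eq_single s']
      · rw [Pi.single_eq_same, one_mul]
      · intro b' _ hb'; rw [Pi.single_eq_of_ne hb', zero_mul, mul_zero]
      · intro h; exact absurd (Finset.mem_univ _) h
    rw [e1, e2, sub_eq_zero] at h0
    exact h0.symm
  -- integer lifts
  set Nz : Fin g → Fin g → ℤ := fun i j => ((εk i * Mp i j).val : ℤ) with hNz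
  have hNzsym : ∀ i j, Nz i j = Nz j i := by
    intro i j; rw [hNz]; exact congrArg _ (congrArg _ (hNsym i j))
  set Mz : Fin g → Fin g → ℤ := fun i j => εz i * Nz i j with hMz
  have hNzcast : ∀ i j, ((Nz i j : ℤ) : ZMod p) = εk i * Mp i j := by
    intro i j
    rw [hNz]
    push_cast
    exact ZMod.natCast_rightInverse _
  have hMzcast : ∀ i j, ((Mz i j : ℤ) : ZMod p) = Mp i j := by
    intro i j
    rw [hMz]
    push_cast
    rw [hNzcast, hεcast, ← mul_assoc, hεk2, one_mul]
  have hεM : ∀ i j, εz i * Mz i j = Nz i j := by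
    intro i j; rw [hMz, ← mul_assoc, hεz2, one_mul]
  -- the integer submodule: graph of Mz over the dd-coordinates
  set Φ : ((Fin g ⊕ Fin g) → ℤ) →ₗ[ℤ] (Fin g → ℤ) :=
    { toFun := fun x i => x (cc i) - ∑ j, Mz i j * x (dd j)
      map_add' := by
        intro x y; funext i
        simp only [Pi.add_apply, mul_add, Finset.sum_add_distrib]
        ring
      map_smul' := by
        intro m x; funext i
        simp only [Pi.smul_apply, smul_eq_mul, RingHom.id_apply, Finset.mul_sum]
        rw [mul_sub, Finset.mul_sum]
        congr 1
        refine Finset.sum_congr rfl fun j _ => by ring } with hΦ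
  have hmemB : ∀ x, x ∈ LinearMap.ker Φ ↔ ∀ i, x (cc i) = ∑ j, Mz i j * x (dd j) := by
    intro x
    rw [LinearMap.mem_ker]
    constructor
    · intro h i
      have := congrFun h i
      simpa [hΦ, sub_eq_zero] using this
    · intro h
      funext i
      simp only [hΦ, LinearMap.coe_mk, AddHom.coe_mk, h i, sub_self, Pi.zero_apply]
  refine ⟨LinearMap.ker Φ, ?_, ?_, ?_⟩
  · -- ω vanishes on B
    intro x hx y hy
    rw [hω]
    have hx' := (hmemB x).mp hx
    have hy' := (hmemB y).mp hy
    have hterm : ∀ i : Fin g, x (Sum.inl i) * y (Sum.inr i) - x (Sum.inr i) * y (Sum.inl i)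
        = ∑ j, Nz i j * (x (dd j) * y (dd i) - x (dd i) * y (dd j)) := by
      intro i
      have expand : ∀ j, Nz i j * (x (dd j) * y (dd i) - x (dd i) * y (dd j))
          = εz i * (Mz i j * x (dd j) * y (dd i)) - εz i * (x (dd i) * (Mz i j * y (dd j))) := by
        intro j
        rw [← hεM i j]; ring
      rw [Finset.sum_congr rfl fun j _ => expand j, Finset.sum_sub_distrib]
      rw [← Finset.mul_sum, ← Finset.mul_sum]
      have hxs : ∑ j, Mz i j * x (dd j) * y (dd i) = x (cc i) * y (dd i) := by
        rw [hx' i, Finset.sum_mul]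
      have hys : ∑ j, x (dd i) * (Mz i j * y (dd j)) = x (dd i) * y (cc i) := by
        rw [hy' i, Finset.mul_sum]
      rw [hxs, hys]
      by_cases hi : i ∈ S
      · rw [show Sum.inl i = cc i from (hccS i hi).symm,
          show Sum.inr i = dd i from (hddS i hi).symm,
          show εz i = 1 by rw [hεz]; exact if_pos hi]
        ring
      · rw [show Sum.inl i = dd i from (hddSc i hi).symm,
          show Sum.inr i = cc i from (hccSc i hi).symm,
          show εz i = -1 by rw [hεz]; exact if_neg hi]
        ring
    rw [Finset.sum_congr rfl fun i _ => hterm i]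
    have split : ∑ i : Fin g, ∑ j, Nz i j * (x (dd j) * y (dd i) - x (dd i) * y (dd j))
        = (∑ i : Fin g, ∑ j, Nz i j * (x (dd j) * y (dd i)))
          - ∑ i : Fin g, ∑ j, Nz i j * (x (dd i) * y (dd j)) := by
      rw [← Finset.sum_sub_distrib]
      refine Finset.sum_congr rfl fun i _ => ?_
      rw [← Finset.sum_sub_distrib]
      refine Finset.sum_congr rfl fun j _ => ?_
      ring
    rw [split]
    have hcomm : ∑ i : Fin g, ∑ j, Nz i j * (x (dd i) * y (dd j))
        = ∑ i : Fin g, ∑ j, Nz i j * (x (dd j) * y (dd i)) := by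
      rw [Finset.sum_comm]
      exact Finset.sum_congr rfl fun i _ => Finset.sum_congr rfl fun j _ => by
        rw [hNzsym i j]
    rw [hcomm, sub_self]
  · -- the quotient is free of rank g
    have hΦsurj : Function.Surjective Φ := by
      intro yv
      refine ⟨fun t => Sum.casesOn t (fun i => if i ∈ S then yv i else 0)
        (fun i => if i ∈ S then 0 else yv i), ?_⟩
      funext i
      have hd : ∀ j : Fin g, (fun t => Sum.casesOn t (fun i => if i ∈ S then yv i else 0)
          (fun i : Fin g => if i ∈ S then 0 else yv i) : (Fin g ⊕ Fin g) → ℤ) (dd j) = 0 := by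
        intro j
        by_cases hj : j ∈ S
        · rw [hddS j hj]; simp [hj]
        · rw [hddSc j hj]; simp [hj]
      have hc : (fun t => Sum.casesOn t (fun i => if i ∈ S then yv i else 0)
          (fun i : Fin g => if i ∈ S then 0 else yv i) : (Fin g ⊕ Fin g) → ℤ) (cc i) = yv i := by
        by_cases hi : i ∈ S
        · rw [hccS i hi]; simp [hi]
        · rw [hccSc i hi]; simp [hi]
      show _ - _ = yv i
      rw [hc]
      rw [Finset.sum_congr rfl fun j _ => by rw [hd j, mul_zero]]
      simp
    exact ⟨Φ.quotKerEquivOfSurjective hΦsurj⟩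
  · -- the image is A
    refine Submodule.ext fun z => ?_
    rw [Submodule.mem_map, Submodule.restrictScalars_mem]
    constructor
    · rintro ⟨x, hxB, rfl⟩
      have hx' := (hmemB x).mp hxB
      refine hA2 (φ x) fun i => ?_
      rw [hφ, hx' i]
      push_cast
      refine Finset.sum_congr rfl fun j _ => ?_
      rw [hMzcast, hφ]
    · intro hzA
      set u : Fin g → ℤ := fun j => ((z (dd j)).val : ℤ) with hu
      have hucast : ∀ j, ((u j : ℤ) : ZMod p) = z (dd j) := by
        intro j
        rw [hu]
        push_cast
        exact ZMod.natCast_rightInverse _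
      set x : (Fin g ⊕ Fin g) → ℤ := fun t => Sum.casesOn t
        (fun i => if i ∈ S then ∑ j, Mz i j * u j else u i)
        (fun i => if i ∈ S then u i else ∑ j, Mz i j * u j) with hx
      have hxd : ∀ i, x (dd i) = u i := by
        intro i
        by_cases hi : i ∈ S
        · rw [hddS i hi, hx]; simp [hi]
        · rw [hddSc i hi, hx]; simp [hi]
      have hxc : ∀ i, x (cc i) = ∑ j, Mz i j * u j := by
        intro i
        by_cases hi : i ∈ S
        · rw [hccS i hi, hx]; simp [hi]
        · rw [hccSc i hi, hx]; simp [hi]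
      have hxB : x ∈ LinearMap.ker Φ := by
        refine (hmemB x).mpr fun i => ?_
        rw [hxc i]
        exact Finset.sum_congr rfl fun j _ => by rw [hxd j]
      refine ⟨x, hxB, ?_⟩
      funext t
      rw [hφ]
      have hgen : ∀ i : Fin g, ((x (dd i) : ℤ) : ZMod p) = z (dd i)
          ∧ ((x (cc i) : ℤ) : ZMod p) = z (cc i) := by
        intro i
        constructor
        · rw [hxd i]; exact hucast i
        · rw [hxc i]
          push_cast
          rw [hA1 z hzA i]
          refine Finset.sum_congr rfl fun j _ => ?_
          rw [hMzcast, hucast]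
      cases t with
      | inl i =>
        by_cases hi : i ∈ S
        · have := (hgen i).2; rwa [hccS i hi] at this
        · have := (hgen i).1; rwa [hddSc i hi] at this
      | inr i =>
        by_cases hi : i ∈ S
        · have := (hgen i).1; rwa [hddS i hi] at this
        · have := (hgen i).2; rwa [hccSc i hi] at this
end

section
/- The group Sp(2g, ℤ) acts transitively on ℤ-Lagrangians: if B and B' are submodules of ℤ^{2g} with ω|_B ≡ 0, ω|_{B'} ≡ 0, ℤ^{2g}/B ≅ ℤ^g and ℤ^{2g}/B' ≅ ℤ^g, then there exists h ∈ Sp(2g, ℤ) with h(B) = B'. -/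
open Matrix

theorem lagrangian_exists_symplectic (g : ℕ)
    (ω : ((Fin g ⊕ Fin g) → ℤ) → ((Fin g ⊕ Fin g) → ℤ) → ℤ)
    (hω : ∀ x y, ω x y =
      ∑ i : Fin g, (x (Sum.inl i) * y (Sum.inr i) - x (Sum.inr i) * y (Sum.inl i)))
    (B : Submodule ℤ ((Fin g ⊕ Fin g) → ℤ))
    (hBiso : ∀ x ∈ B, ∀ y ∈ B, ω x y = 0)
    (hBquot : Nonempty ((((Fin g ⊕ Fin g) → ℤ) ⧸ B) ≃ₗ[ℤ] (Fin g → ℤ))) :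
    ∃ C ∈ Matrix.symplecticGroup (Fin g) ℤ,
      Submodule.map C.mulVecLin (Submodule.span ℤ (Set.range fun i : Fin g =>
        (Pi.single (Sum.inl i) 1 : (Fin g ⊕ Fin g) → ℤ))) = B := by
  obtain ⟨q⟩ := hBquot
  -- bilinearity facts about ω
  have hsub_r : ∀ x y z : (Fin g ⊕ Fin g) → ℤ, ω x (y - z) = ω x y - ω x z := by
    intro x y z
    simp only [hω, Pi.sub_apply, ← Finset.sum_sub_distrib]
    apply Finset.sum_congr rfl; intros; ring
  have hsub_l : ∀ x y z : (Fin g ⊕ Fin g) → ℤ, ω (x - y) z = ω x z - ω y z := by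
    intro x y z
    simp only [hω, Pi.sub_apply, ← Finset.sum_sub_distrib]
    apply Finset.sum_congr rfl; intros; ring
  have hsmul_r : ∀ (c : ℤ) (x y : (Fin g ⊕ Fin g) → ℤ), ω x (c • y) = c * ω x y := by
    intro c x y
    simp only [hω, Pi.smul_apply, smul_eq_mul, Finset.mul_sum]
    apply Finset.sum_congr rfl; intros; ring
  have hsmul_l : ∀ (c : ℤ) (x y : (Fin g ⊕ Fin g) → ℤ), ω (c • x) y = c * ω x y := by
    intro c x y
    simp only [hω, Pi.smul_apply, smul_eq_mul, Finset.mul_sum]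
    apply Finset.sum_congr rfl; intros; ring
  have hsum_r : ∀ (x : (Fin g ⊕ Fin g) → ℤ) (v : Fin g → (Fin g ⊕ Fin g) → ℤ),
      ω x (∑ k, v k) = ∑ k, ω x (v k) := by
    intro x v
    simp only [hω, Finset.sum_apply, Finset.mul_sum, ← Finset.sum_sub_distrib]
    exact Finset.sum_comm
  have hsum_l : ∀ (x : (Fin g ⊕ Fin g) → ℤ) (v : Fin g → (Fin g ⊕ Fin g) → ℤ),
      ω (∑ k, v k) x = ∑ k, ω (v k) x := by
    intro x v
    simp only [hω, Finset.sum_apply, Finset.sum_mul, ← Finset.sum_sub_distrib]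
    exact Finset.sum_comm
  have hanti : ∀ x y : (Fin g ⊕ Fin g) → ℤ, ω x y = -ω y x := by
    intro x y
    rw [hω, hω, ← Finset.sum_neg_distrib]
    apply Finset.sum_congr rfl; intros; ring
  -- the quotient is free, get a splitting of the projection
  haveI : Module.Free ℤ (((Fin g ⊕ Fin g) → ℤ) ⧸ B) := Module.Free.of_equiv q.symm
  obtain ⟨s, hs⟩ := Module.projective_lifting_property B.mkQ LinearMap.id
    (Submodule.mkQ_surjective B)
  -- B has rank g
  have hfB : Module.finrank ℤ ↥B = g := by
    have e : (↥B × (((Fin g ⊕ Fin g) → ℤ) ⧸ B)) ≃ₗ[ℤ] ((Fin g ⊕ Fin g) → ℤ) :=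
      lequivProdOfRightSplitExact B.injective_subtype
        (by rw [Submodule.range_subtype, Submodule.ker_mkQ]) hs
    have h1 := e.finrank_eq
    rw [Module.finrank_prod, q.finrank_eq] at h1
    have h2 : Module.finrank ℤ ((Fin g ⊕ Fin g) → ℤ) = g + g := by
      simp [Module.finrank_pi]
    have h3 : Module.finrank ℤ (Fin g → ℤ) = g := by simp [Module.finrank_pi]
    omega
  -- basis of B
  let bB : Module.Basis (Fin g) ℤ ↥B := (Module.finBasis ℤ ↥B).reindex (finCongr hfB)
  let a : Fin g → (Fin g ⊕ Fin g) → ℤ := fun i => (bB i : (Fin g ⊕ Fin g) → ℤ)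
  have haB : ∀ i, a i ∈ B := fun i => (bB i).2
  have hspan : Submodule.span ℤ (Set.range a) = B := by
    have h1 : a = B.subtype ∘ bB := rfl
    rw [h1, Set.range_comp, ← Submodule.map_span, bB.span_eq, Submodule.map_top,
      Submodule.range_subtype]
  -- projection onto B
  have hmem : ∀ x : (Fin g ⊕ Fin g) → ℤ, x - s (B.mkQ x) ∈ B := by
    intro x
    have h0 : B.mkQ (x - s (B.mkQ x)) = 0 := by
      rw [map_sub, show B.mkQ (s (B.mkQ x)) = B.mkQ x from LinearMap.congr_fun hs (B.mkQ x),
        sub_self]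
    rw [Submodule.mkQ_apply] at h0
    exact (Submodule.Quotient.mk_eq_zero B).mp h0
  let P : ((Fin g ⊕ Fin g) → ℤ) →ₗ[ℤ] ↥B :=
    LinearMap.codRestrict B (LinearMap.id - s ∘ₗ B.mkQ) hmem
  have hP : ∀ (x) (hx : x ∈ B), P x = ⟨x, hx⟩ := by
    intro x hx
    apply Subtype.ext
    have h0 : (Submodule.Quotient.mk x : ((Fin g ⊕ Fin g) → ℤ) ⧸ B) = 0 :=
      (Submodule.Quotient.mk_eq_zero B).mpr hx
    simp [P, LinearMap.codRestrict, Submodule.mkQ_apply, h0]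
  -- dual functionals
  let F : Fin g → (((Fin g ⊕ Fin g) → ℤ) →ₗ[ℤ] ℤ) := fun j => (bB.coord j) ∘ₗ P
  have hF : ∀ i j, F j (a i) = if i = j then 1 else 0 := by
    intro i j
    have h1 : P (a i) = bB i := by rw [hP (a i) (haB i)]
    simp only [F, LinearMap.comp_apply, h1, Module.Basis.coord_apply, Module.Basis.repr_self]
    simp [Finsupp.single_apply]
  -- candidate dual vectors
  let b0 : Fin g → (Fin g ⊕ Fin g) → ℤ := fun j =>
    Sum.elim (fun i => -(F j (Pi.single (Sum.inr i) 1))) (fun i => F j (Pi.single (Sum.inl i) 1))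
  have hb0 : ∀ j x, ω x (b0 j) = F j x := by
    intro j x
    have hx : x = ∑ p, Pi.single p (x p) := (Finset.univ_sum_single x).symm
    have hxF : F j x = ∑ p, x p * F j (Pi.single p 1) := by
      conv_lhs => rw [hx, map_sum]
      apply Finset.sum_congr rfl
      intro p _
      have h2 : Pi.single p (x p) = x p • (Pi.single p 1 : (Fin g ⊕ Fin g) → ℤ) := by
        ext r; by_cases h : r = p <;> simp [Pi.single_apply, h]
      rw [h2, _root_.map_smul, smul_eq_mul]
    rw [hω, hxF, Fintype.sum_sum_type]
    simp only [b0, Sum.elim_inl, Sum.elim_inr]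
    rw [← Finset.sum_add_distrib]
    apply Finset.sum_congr rfl; intros; ring
  have hab0 : ∀ i j, ω (a i) (b0 j) = if i = j then 1 else 0 := by
    intro i j; rw [hb0, hF]
  -- correct b0 to make it isotropic
  let μ : Fin g → Fin g → ℤ := fun i j => if i ≤ j then ω (b0 i) (b0 j) else 0
  let b : Fin g → (Fin g ⊕ Fin g) → ℤ := fun i => b0 i - ∑ k, μ i k • a k
  have hSB : ∀ i, (∑ k, μ i k • a k) ∈ B :=
    fun i => Submodule.sum_mem _ fun k _ => Submodule.smul_mem _ _ (haB k)
  have hba0 : ∀ i j, ω (b0 i) (a j) = -(if j = i then 1 else 0) := by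
    intro i j; rw [hanti, hab0]
  have hab : ∀ i j, ω (a i) (b j) = if i = j then 1 else 0 := by
    intro i j
    rw [show b j = b0 j - ∑ k, μ j k • a k from rfl, hsub_r, hsum_r]
    have h1 : ∀ k, ω (a i) (μ j k • a k) = 0 := fun k => by
      rw [hsmul_r, hBiso _ (haB i) _ (haB k), mul_zero]
    rw [Finset.sum_congr rfl (fun k _ => h1 k), Finset.sum_const_zero, sub_zero, hab0]
  have hbb : ∀ i j, ω (b i) (b j) = 0 := by
    intro i j
    have e1 : ω (b0 i) (∑ k, μ j k • a k) = -μ j i := by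
      rw [hsum_r]
      have : ∀ k, ω (b0 i) (μ j k • a k) = μ j k * (-(if k = i then 1 else 0)) := fun k => by
        rw [hsmul_r, hba0]
      rw [Finset.sum_congr rfl fun k _ => this k]
      simp [mul_ite]
    have e2 : ω (∑ k, μ i k • a k) (b0 j) = μ i j := by
      rw [hsum_l]
      have : ∀ k, ω (μ i k • a k) (b0 j) = μ i k * (if k = j then 1 else 0) := fun k => by
        rw [hsmul_l, hab0]
      rw [Finset.sum_congr rfl fun k _ => this k]
      simp [mul_ite]
    have e3 : ω (∑ k, μ i k • a k) (∑ k, μ j k • a k) = 0 := by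
      rw [hsum_l]
      have : ∀ k, ω (μ i k • a k) (∑ l, μ j l • a l) = 0 := fun k => by
        rw [hsmul_l, hBiso _ (haB k) _ (hSB j), mul_zero]
      rw [Finset.sum_congr rfl fun k _ => this k, Finset.sum_const_zero]
    rw [show b i = b0 i - ∑ k, μ i k • a k from rfl,
        show b j = b0 j - ∑ k, μ j k • a k from rfl,
        hsub_l, hsub_r, hsub_r, e1, e2, e3, sub_zero]
    have hμ : μ j i - μ i j = -(ω (b0 i) (b0 j)) := by
      rcases lt_trichotomy i j with h | h | h
      · have h1 : ¬ (j ≤ i) := not_le.mpr h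
        simp [μ, h.le, h1]
      · subst h
        have h0 : ω (b0 i) (b0 i) = 0 := by have := hanti (b0 i) (b0 i); omega
        simp [μ, h0]
      · have h1 : ¬ (i ≤ j) := not_le.mpr h
        have h2 : ω (b0 j) (b0 i) = -(ω (b0 i) (b0 j)) := by exact hanti _ _
        simp [μ, h.le, h1, h2]
    ring_nf
    ring_nf at hμ
    omega
  have hba : ∀ i j, ω (b i) (a j) = -(if j = i then 1 else 0) := by
    intro i j; rw [hanti, hab]
  -- assemble the matrix
  let c : (Fin g ⊕ Fin g) → (Fin g ⊕ Fin g) → ℤ := Sum.elim a b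
  let C : Matrix (Fin g ⊕ Fin g) (Fin g ⊕ Fin g) ℤ := Matrix.of fun p q => c q p
  have hgram : ∀ p q, ω (c p) (c q) = (-(Matrix.J (Fin g) ℤ)) p q := by
    intro p q
    rcases p with i | i <;> rcases q with j | j <;>
      simp [c, Matrix.J, hab, hbb, hba, hBiso _ (haB _) _ (haB _), Matrix.one_apply, eq_comm]
  have hJv : ∀ u v : (Fin g ⊕ Fin g) → ℤ, u ⬝ᵥ (Matrix.J (Fin g) ℤ *ᵥ v) = -(ω u v) := by
    intro u v
    rw [hω]
    simp only [dotProduct, Matrix.mulVec, Fintype.sum_sum_type, Matrix.J,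
      Matrix.fromBlocks_apply₁₁, Matrix.fromBlocks_apply₁₂, Matrix.fromBlocks_apply₂₁,
      Matrix.fromBlocks_apply₂₂, Matrix.zero_apply, Matrix.neg_apply, Matrix.one_apply,
      zero_mul, neg_mul, ite_mul, one_mul, Finset.sum_ite_eq, Finset.mem_univ, if_true,
      Finset.sum_neg_distrib, Finset.sum_const_zero, zero_add, add_zero, mul_neg]
    rw [Finset.sum_sub_distrib]
    ring
  have hCmem : C ∈ Matrix.symplecticGroup (Fin g) ℤ := by
    rw [SymplecticGroup.mem_iff']
    ext p q
    have h1 : (Cᵀ * Matrix.J (Fin g) ℤ * C) p q = (c p) ⬝ᵥ (Matrix.J (Fin g) ℤ *ᵥ (c q)) := by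
      rw [Matrix.mul_assoc, Matrix.mul_apply]
      simp only [Matrix.transpose_apply, Matrix.mul_apply, dotProduct, Matrix.mulVec]
      rfl
    rw [h1, hJv, hgram]
    simp
  refine ⟨C, hCmem, ?_⟩
  rw [Submodule.map_span, ← Set.range_comp]
  have himg : (C.mulVecLin ∘ fun i : Fin g => (Pi.single (Sum.inl i) 1 : (Fin g ⊕ Fin g) → ℤ))
      = a := by
    funext i
    ext p
    simp [C, Matrix.mulVecLin_apply, Matrix.mulVec_single, c]
  rw [himg, hspan]

/-- `Sp(2g, ℤ)` acts transitively on `ℤ`-Lagrangians of `ℤ^{2g}` (submodules on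
which the standard symplectic form vanishes and with quotient `≅ ℤ^g`). -/
theorem sp_Z_transitive_on_lagrangians (g : ℕ) (hg : 0 < g)
    (ω : ((Fin g ⊕ Fin g) → ℤ) → ((Fin g ⊕ Fin g) → ℤ) → ℤ)
    (hω : ∀ x y, ω x y =
      ∑ i : Fin g, (x (Sum.inl i) * y (Sum.inr i) - x (Sum.inr i) * y (Sum.inl i)))
    (B B' : Submodule ℤ ((Fin g ⊕ Fin g) → ℤ))
    (hBiso : ∀ x ∈ B, ∀ y ∈ B, ω x y = 0)
    (hB'iso : ∀ x ∈ B', ∀ y ∈ B', ω x y = 0)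
    (hBquot : Nonempty ((((Fin g ⊕ Fin g) → ℤ) ⧸ B) ≃ₗ[ℤ] (Fin g → ℤ)))
    (hB'quot : Nonempty ((((Fin g ⊕ Fin g) → ℤ) ⧸ B') ≃ₗ[ℤ] (Fin g → ℤ))) :
    ∃ h ∈ Matrix.symplecticGroup (Fin g) ℤ,
      B.map h.mulVecLin = B' := by
  obtain ⟨C, hC, hCB⟩ := lagrangian_exists_symplectic g ω hω B hBiso hBquot
  obtain ⟨C', hC', hCB'⟩ := lagrangian_exists_symplectic g ω hω B' hB'iso hB'quot
  have hdet : IsUnit C.det := SymplecticGroup.symplectic_det hC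
  have hCinv : C⁻¹ ∈ Matrix.symplecticGroup (Fin g) ℤ := by
    rw [SymplecticGroup.inv_eq_symplectic_inv C hC]
    exact mul_mem (mul_mem (SymplecticGroup.neg_mem (SymplecticGroup.J_mem _ _))
      (SymplecticGroup.transpose_mem hC)) (SymplecticGroup.J_mem _ _)
  refine ⟨C' * C⁻¹, mul_mem hC' hCinv, ?_⟩
  have h1 : Submodule.map (C⁻¹).mulVecLin B = Submodule.span ℤ (Set.range fun i : Fin g =>
      (Pi.single (Sum.inl i) 1 : (Fin g ⊕ Fin g) → ℤ)) := by
    rw [← hCB, ← Submodule.map_comp, ← Matrix.mulVecLin_mul, Matrix.nonsing_inv_mul C hdet,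
      Matrix.mulVecLin_one, Submodule.map_id]
  rw [Matrix.mulVecLin_mul, Submodule.map_comp, h1, hCB']
end
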